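/- As operators on ℂ[x₁,…,xₙ], the Dunkl operators satisfy the commutation relations of the rational Cherednik algebra: for every polynomial p and every i, one has D_i(x_i·p) − x_i·D_i(p) = p − c·∑_{j≠i} s_{ij}(p), and for every i ≠ j one has D_i(x_j·p) − x_j·D_i(p) = c·s_{ij}(p). -/
import Mathlib


open MvPolynomial

/-- The Dunkl operators satisfy the commutation relations of the
rational Cherednik algebra: `D_i(x_i·p) − x_i·D_i(p) = p − c·∑_{j≠i} s_{ij}(p)` and,
for `i ≠ j`, `D_i(x_j·p) − x_j·D_i(p) = c·s_{ij}(p)`. -/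
theorem dunkl_cherednik_relations (n : ℕ) (hn : 1 ≤ n) (c : ℂ)
    (Δ : Fin n → Fin n → MvPolynomial (Fin n) ℂ → MvPolynomial (Fin n) ℂ)
    (hΔ : ∀ i j p, (X i - X j) * Δ i j p = rename (Equiv.swap i j) p - p)
    (D : Fin n → MvPolynomial (Fin n) ℂ → MvPolynomial (Fin n) ℂ)
    (hD : ∀ i p, D i p = pderiv i p + C c * ∑ j ∈ Finset.univ.erase i, Δ i j p) :
    (∀ (i : Fin n) (p : MvPolynomial (Fin n) ℂ),
        D i (X i * p) - X i * D i p
          = p - C c * ∑ j ∈ Finset.univ.erase i, rename (Equiv.swap i j) p) ∧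
    (∀ (i j : Fin n) (p : MvPolynomial (Fin n) ℂ), i ≠ j →
        D i (X j * p) - X j * D i p = C c * rename (Equiv.swap i j) p) := by
  have hX : ∀ {i j : Fin n}, i ≠ j → (X i - X j : MvPolynomial (Fin n) ℂ) ≠ 0 := by
    intro i j hij
    exact sub_ne_zero.mpr (fun h => hij (X_injective h))
  -- Δ i j (X i * p) = X i * Δ i j p - rename (swap i j) p
  have key1 : ∀ (i j : Fin n), i ≠ j → ∀ p,
      Δ i j (X i * p) = X i * Δ i j p - rename (Equiv.swap i j) p := by
    intro i j hij p
    apply mul_left_cancel₀ (hX hij)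
    have h1 := hΔ i j (X i * p)
    have h2 := hΔ i j p
    rw [map_mul, rename_X, Equiv.swap_apply_left] at h1
    linear_combination h1 - X i * h2
  -- Δ i j (X j * p) = X j * Δ i j p + rename (swap i j) p
  have key2 : ∀ (i j : Fin n), i ≠ j → ∀ p,
      Δ i j (X j * p) = X j * Δ i j p + rename (Equiv.swap i j) p := by
    intro i j hij p
    apply mul_left_cancel₀ (hX hij)
    have h1 := hΔ i j (X j * p)
    have h2 := hΔ i j p
    rw [map_mul, rename_X, Equiv.swap_apply_right] at h1
    linear_combination h1 - X j * h2
  -- for k ∉ {i, j} : Δ i k (X j * p) = X j * Δ i k p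
  have key3 : ∀ (i k j : Fin n), i ≠ k → j ≠ i → j ≠ k → ∀ p,
      Δ i k (X j * p) = X j * Δ i k p := by
    intro i k j hik hji hjk p
    apply mul_left_cancel₀ (hX hik)
    have h1 := hΔ i k (X j * p)
    have h2 := hΔ i k p
    rw [map_mul, rename_X, Equiv.swap_apply_of_ne_of_ne hji hjk] at h1
    linear_combination h1 - X j * h2
  constructor
  · intro i p
    rw [hD, hD]
    have hp : pderiv i (X i * p) = p + X i * pderiv i p := by
      rw [pderiv_mul, pderiv_X_self]; ring
    have hs : ∑ j ∈ Finset.univ.erase i, Δ i j (X i * p)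
        = X i * (∑ j ∈ Finset.univ.erase i, Δ i j p)
          - ∑ j ∈ Finset.univ.erase i, rename (Equiv.swap i j) p := by
      rw [Finset.mul_sum, ← Finset.sum_sub_distrib]
      refine Finset.sum_congr rfl fun j hj => ?_
      exact key1 i j (Ne.symm (Finset.ne_of_mem_erase hj)) p
    rw [hp, hs]
    ring
  · intro i j p hij
    rw [hD, hD]
    have hp : pderiv i (X j * p) = X j * pderiv i p := by
      rw [pderiv_mul, pderiv_X, Pi.single_eq_of_ne (Ne.symm hij)]; ring
    have hs : ∑ k ∈ Finset.univ.erase i, Δ i k (X j * p)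
        = X j * (∑ k ∈ Finset.univ.erase i, Δ i k p)
          + rename (Equiv.swap i j) p := by
      have hterm : ∀ k ∈ Finset.univ.erase i, Δ i k (X j * p)
          = X j * Δ i k p
            + (if k = j then rename (Equiv.swap i j) p else 0) := by
        intro k hk
        have hik : i ≠ k := Ne.symm (Finset.ne_of_mem_erase hk)
        by_cases hkj : k = j
        · subst hkj
          rw [if_pos rfl]
          exact key2 i k hik p
        · rw [if_neg hkj, add_zero]
          exact key3 i k j hik (Ne.symm hij) (Ne.symm hkj) p
      rw [Finset.sum_congr rfl hterm, Finset.sum_add_distrib, ← Finset.mul_sum,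
        Finset.sum_ite_eq' _ j]
      rw [if_pos (Finset.mem_erase.mpr ⟨Ne.symm hij, Finset.mem_univ j⟩)]
    rw [hp, hs]
    ring
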